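/- Let 0 < γ < π/4 and let L* be a d-subspace of ℝ^D with d ≥ 1. Let the dataset consist of N_in nonzero inliers lying in L* and N_out nonzero outliers in ℝ^D; let X̃_in and X̃_out be the D × N_in and D × N_out matrices whose columns are the inliers and outliers normalized to unit Euclidean norm, and suppose (sin(γ)/√2) · λ_d(X̃_in X̃_inᵀ) − ‖X̃_out‖₂² > 0. Let A = X̃_in X̃_inᵀ + X̃_out X̃_outᵀ and let L_SPCA be the span of d orthonormal eigenvectors of A corresponding to its d largest eigenvalues. Then the largest principal angle between L_SPCA and L* is at most γ; equivalently, ‖P_{L_SPCA} − P_{L*}‖₂ ≤ sin(γ), where P_L denotes the orthogonal projection onto L. -/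

import Mathlib

open Module

/-- The spectral (operator `ℓ² → ℓ²`) norm of a matrix. -/
noncomputable def specNorm {m n : ℕ} (A : Matrix (Fin m) (Fin n) ℝ) : ℝ :=
  ‖LinearMap.toContinuousLinearMap (Matrix.toEuclideanLin A)‖

/-- The orthogonal projection onto a subspace `L` of `ℝ^D`, as a map `ℝ^D → ℝ^D`. -/
noncomputable def projCLM {D : ℕ} (L : Submodule ℝ (EuclideanSpace ℝ (Fin D))) :
    EuclideanSpace ℝ (Fin D) →L[ℝ] EuclideanSpace ℝ (Fin D) :=
  L.subtypeL.comp (L.orthogonalProjectionOnto)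

section Helpers

lemma specNorm_bound {m n : ℕ} (A : Matrix (Fin m) (Fin n) ℝ) (y : EuclideanSpace ℝ (Fin n)) :
    ‖Matrix.toEuclideanLin A y‖ ≤ specNorm A * ‖y‖ := by
  have := (LinearMap.toContinuousLinearMap (Matrix.toEuclideanLin A)).le_opNorm y
  simpa [specNorm] using this

lemma toEuclideanLin_transpose' {m n : ℕ} (A : Matrix (Fin m) (Fin n) ℝ) :
    Matrix.toEuclideanLin A.transpose = LinearMap.adjoint (Matrix.toEuclideanLin A) := by
  rw [← Matrix.toEuclideanLin_conjTranspose_eq_adjoint]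
  congr 1

lemma toEuclideanLin_mul' {m n k : ℕ} (A : Matrix (Fin m) (Fin n) ℝ) (B : Matrix (Fin n) (Fin k) ℝ)
    (x : EuclideanSpace ℝ (Fin k)) :
    Matrix.toEuclideanLin (A * B) x = Matrix.toEuclideanLin A (Matrix.toEuclideanLin B x) := by
  simp [Matrix.toEuclideanLin_apply, Matrix.mulVec_mulVec]

lemma gram_inner_nonneg {m n : ℕ} (A : Matrix (Fin m) (Fin n) ℝ) (x : EuclideanSpace ℝ (Fin m)) :
    0 ≤ inner (𝕜 := ℝ) x (Matrix.toEuclideanLin (A * A.transpose) x) := by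
  rw [toEuclideanLin_mul', toEuclideanLin_transpose', ← LinearMap.adjoint_inner_left]
  exact real_inner_self_nonneg

lemma adjoint_norm_le {m n : ℕ} (A : Matrix (Fin m) (Fin n) ℝ) (x : EuclideanSpace ℝ (Fin m)) :
    ‖Matrix.toEuclideanLin A.transpose x‖ ≤ specNorm A * ‖x‖ := by
  set y := Matrix.toEuclideanLin A.transpose x with hy
  have h1 : ‖y‖ ^ 2 = inner (𝕜 := ℝ) x (Matrix.toEuclideanLin A y) := by
    rw [hy, toEuclideanLin_transpose', ← LinearMap.adjoint_inner_left,
      real_inner_self_eq_norm_sq]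
  have h2 : inner (𝕜 := ℝ) x (Matrix.toEuclideanLin A y) ≤ ‖x‖ * (specNorm A * ‖y‖) := by
    calc inner (𝕜 := ℝ) x (Matrix.toEuclideanLin A y) ≤ ‖x‖ * ‖Matrix.toEuclideanLin A y‖ :=
        real_inner_le_norm _ _
    _ ≤ ‖x‖ * (specNorm A * ‖y‖) := by
        have := specNorm_bound A y
        exact mul_le_mul_of_nonneg_left this (norm_nonneg _)
  have hs : 0 ≤ specNorm A := norm_nonneg _
  have h3 : ‖y‖ * ‖y‖ ≤ (specNorm A * ‖x‖) * ‖y‖ := by nlinarith [h1, h2]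
  rcases (norm_nonneg y).eq_or_lt with h | h
  · rw [← h]; positivity
  · exact le_of_mul_le_mul_right h3 h

lemma gram_norm_le {m n : ℕ} (A : Matrix (Fin m) (Fin n) ℝ) (x : EuclideanSpace ℝ (Fin m)) :
    ‖Matrix.toEuclideanLin (A * A.transpose) x‖ ≤ specNorm A ^ 2 * ‖x‖ := by
  rw [toEuclideanLin_mul']
  calc ‖Matrix.toEuclideanLin A (Matrix.toEuclideanLin A.transpose x)‖
      ≤ specNorm A * ‖Matrix.toEuclideanLin A.transpose x‖ := specNorm_bound _ _
    _ ≤ specNorm A * (specNorm A * ‖x‖) := by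
        refine mul_le_mul_of_nonneg_left (adjoint_norm_le A x) ?_
        exact norm_nonneg _
    _ = specNorm A ^ 2 * ‖x‖ := by ring

lemma toEuclideanLin_mem {D N : ℕ} {L : Submodule ℝ (EuclideanSpace ℝ (Fin D))}
    {M : Matrix (Fin D) (Fin N) ℝ}
    (h : ∀ j, (WithLp.toLp 2 (fun i => M i j) : EuclideanSpace ℝ (Fin D)) ∈ L)
    (y : EuclideanSpace ℝ (Fin N)) : Matrix.toEuclideanLin M y ∈ L := by
  have : Matrix.toEuclideanLin M y
      = ∑ j, (y j) • ((WithLp.toLp 2 (fun i => M i j) : EuclideanSpace ℝ (Fin D))) := by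
    apply PiLp.ext
    intro i
    simp [Matrix.toEuclideanLin_apply, Matrix.mulVec, dotProduct, Finset.sum_apply,
      mul_comm]
  rw [this]
  exact Submodule.sum_mem _ fun j _ => Submodule.smul_mem _ _ (h j)

variable {D : ℕ}
local notation "Euc" => EuclideanSpace ℝ (Fin D)

lemma parseval_real (b : OrthonormalBasis (Fin D) ℝ Euc) (z : Euc) :
    ‖z‖ ^ 2 = ∑ i, inner (𝕜 := ℝ) (b i) z ^ 2 := by
  have := b.sum_inner_mul_inner z z
  rw [← real_inner_self_eq_norm_sq, ← this]
  congr 1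
  funext i
  rw [real_inner_comm z (b i), sq]

lemma eigen_apply (b : OrthonormalBasis (Fin D) ℝ Euc) (T : Euc →ₗ[ℝ] Euc) (μ : Fin D → ℝ)
    (h : ∀ i, T (b i) = μ i • b i) (z : Euc) :
    T z = ∑ i, (μ i * inner (𝕜 := ℝ) (b i) z) • b i := by
  conv_lhs => rw [← b.sum_repr' z]
  rw [map_sum]
  congr 1
  funext i
  rw [map_smul, h i, smul_smul, mul_comm]

lemma quad_eq (b : OrthonormalBasis (Fin D) ℝ Euc) (T : Euc →ₗ[ℝ] Euc) (μ : Fin D → ℝ)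
    (h : ∀ i, T (b i) = μ i • b i) (z : Euc) :
    inner (𝕜 := ℝ) z (T z) = ∑ i, μ i * inner (𝕜 := ℝ) (b i) z ^ 2 := by
  rw [eigen_apply b T μ h z, inner_sum]
  congr 1
  funext i
  rw [real_inner_smul_right, real_inner_comm z (b i)]
  ring

lemma inner_eq_zero_of_mem_span {s : Set Euc} {x z : Euc}
    (h : ∀ y ∈ s, inner (𝕜 := ℝ) x y = 0) (hz : z ∈ Submodule.span ℝ s) :
    inner (𝕜 := ℝ) x z = 0 := by
  induction hz using Submodule.span_induction with
  | mem y hy => exact h y hy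
  | zero => simp
  | add u v _ _ hu hv => rw [inner_add_right, hu, hv, add_zero]
  | smul a u _ hu => rw [real_inner_smul_right, hu, mul_zero]

lemma norm_sum_smul_sq (b : OrthonormalBasis (Fin D) ℝ Euc) (a : Fin D → ℝ) :
    ‖∑ i, a i • b i‖ ^ 2 = ∑ i, a i ^ 2 := by
  rw [parseval_real b]
  congr 1
  funext i
  congr 1
  rw [inner_sum]
  rw [Finset.sum_eq_single i]
  · rw [real_inner_smul_right, real_inner_self_eq_norm_sq, b.orthonormal.1 i]
    simp
  · intro j _ hj
    rw [real_inner_smul_right, b.orthonormal.2 (Ne.symm hj), mul_zero]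
  · simp

lemma inner_sum_smul (b : OrthonormalBasis (Fin D) ℝ Euc) (a : Fin D → ℝ) (j : Fin D) :
    inner (𝕜 := ℝ) (b j) (∑ i, a i • b i) = a j := by
  rw [inner_sum, Finset.sum_eq_single j]
  · rw [real_inner_smul_right, real_inner_self_eq_norm_sq, b.orthonormal.1 j]
    simp
  · intro i _ hi
    rw [real_inner_smul_right, b.orthonormal.2 (Ne.symm hi), mul_zero]
  · simp

lemma projCLM_mem (L : Submodule ℝ Euc) (x : Euc) : projCLM L x ∈ L := Submodule.starProjection_apply_mem L x

lemma projCLM_sub_mem (L : Submodule ℝ Euc) (x : Euc) : x - projCLM L x ∈ Lᗮ :=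
  Submodule.sub_starProjection_mem_orthogonal (K := L) x

lemma projCLM_eq_self (L : Submodule ℝ Euc) {x : Euc} (hx : x ∈ L) : projCLM L x = x :=
  Submodule.starProjection_eq_self_iff.mpr hx

lemma projCLM_pyth (L : Submodule ℝ Euc) (x : Euc) :
    ‖x‖ ^ 2 = ‖projCLM L x‖ ^ 2 + ‖x - projCLM L x‖ ^ 2 := by
  have h0 : inner (𝕜 := ℝ) (projCLM L x) (x - projCLM L x) = 0 :=
    Submodule.inner_right_of_mem_orthogonal (projCLM_mem L x) (projCLM_sub_mem L x)
  have := norm_add_sq_real (projCLM L x) (x - projCLM L x)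
  simp only [add_sub_cancel, h0] at this
  linarith

lemma projCLM_norm_sub_le (L : Submodule ℝ Euc) (x : Euc) : ‖x - projCLM L x‖ ≤ ‖x‖ := by
  have := projCLM_pyth L x
  nlinarith [norm_nonneg (x - projCLM L x), norm_nonneg x, sq_nonneg (‖projCLM L x‖)]

lemma projCLM_norm_le (L : Submodule ℝ Euc) (x : Euc) : ‖projCLM L x‖ ≤ ‖x‖ := by
  have := projCLM_pyth L x
  nlinarith [norm_nonneg (projCLM L x), norm_nonneg x, sq_nonneg (‖x - projCLM L x‖)]

set_option maxHeartbeats 2000000 in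
lemma key {d : ℕ} (hd : 1 ≤ d) (hdD : d ≤ D)
    {s ρ ε2 : ℝ} (hs0 : 0 < s) (hs1 : s ≤ 1) (hρ : 0 < ρ) (hε2 : 0 ≤ ε2)
    (hc : ε2 < s / Real.sqrt 2 * ρ)
    (Lstar : Submodule ℝ Euc) (hLstar : finrank ℝ Lstar = d)
    (T S Eo : Euc →ₗ[ℝ] Euc) (hT : ∀ x, T x = S x + Eo x)
    (hSrange : ∀ x, S x ∈ Lstar)
    (hSquad : ∀ z ∈ Lstar, ρ * ‖z‖ ^ 2 ≤ inner (𝕜 := ℝ) z (S z))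
    (hEnorm : ∀ x, ‖Eo x‖ ≤ ε2 * ‖x‖) (hEpsd : ∀ x, 0 ≤ inner (𝕜 := ℝ) x (Eo x))
    (μ : Fin D → ℝ) (hμ : Antitone μ)
    (bb : OrthonormalBasis (Fin D) ℝ Euc)
    (heigT : ∀ i, T (bb i) = μ i • bb i)
    (Lspca : Submodule ℝ Euc)
    (hLspca : Lspca = Submodule.span ℝ (Set.range fun j : Fin d => bb (Fin.castLE hdD j))) :
    ‖projCLM Lspca - projCLM Lstar‖ ≤ s := by
  classical
  set c : ℝ := ε2 / ρ with hcdef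
  have hsqrt2 : (0:ℝ) < Real.sqrt 2 := by positivity
  have hc0 : 0 ≤ c := div_nonneg hε2 hρ.le
  have hclt : c < s / Real.sqrt 2 := by
    rw [hcdef, div_lt_iff₀ hρ]
    exact hc
  have hc2 : c ^ 2 < s ^ 2 / 2 := by
    have h1 : c ^ 2 < (s / Real.sqrt 2) ^ 2 := by
      apply sq_lt_sq' _ hclt
      nlinarith
    have h2 : (s / Real.sqrt 2) ^ 2 = s ^ 2 / 2 := by
      rw [div_pow, Real.sq_sqrt (by norm_num : (2:ℝ) ≥ 0)]
    linarith
  have hc1 : c ^ 2 < 1 / 2 := by nlinarith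
  have hcc : 0 < 1 - c ^ 2 := by nlinarith
  have hclt1 : c < 1 := by nlinarith
  -- the key ratio
  have hk : c ^ 2 / (1 - c ^ 2) ≤ s ^ 2 := by
    rw [div_le_iff₀ hcc]
    nlinarith
  -- finrank of Lspca
  have honb : Orthonormal ℝ (fun j : Fin d => bb (Fin.castLE hdD j)) :=
    bb.orthonormal.comp _ (Fin.castLE_injective hdD)
  have hfinLspca : finrank ℝ Lspca = d := by
    rw [hLspca, finrank_span_eq_card honb.linearIndependent, Fintype.card_fin]
  -- coordinates of Lspca elements vanish above d
  have hcoordLspca : ∀ v ∈ Lspca, ∀ i : Fin D, d ≤ (i : ℕ) → inner (𝕜 := ℝ) (bb i) v = 0 := by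
    intro v hv i hi
    rw [hLspca] at hv
    refine inner_eq_zero_of_mem_span ?_ hv
    rintro y ⟨j, rfl⟩
    refine bb.orthonormal.2 ?_
    intro hij
    have : (Fin.castLE hdD j : ℕ) = (i : ℕ) := by rw [hij]
    simp [Fin.coe_castLE] at this
    omega
  -- Claim C : eigenvalues of T above index < d are at least ρ
  have hd1D : d - 1 < D := by omega
  have hμd1 : ρ ≤ μ ⟨d - 1, hd1D⟩ := by
    set K2 : Submodule ℝ Euc := Submodule.span ℝ
      (Set.range fun j : Fin (D - (d - 1)) => bb ⟨d - 1 + (j : ℕ), by omega⟩) with hK2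
    have hinj : Function.Injective
        (fun j : Fin (D - (d - 1)) => (⟨d - 1 + (j : ℕ), by omega⟩ : Fin D)) := by
      intro p q hpq
      have : d - 1 + (p : ℕ) = d - 1 + (q : ℕ) := congrArg Fin.val hpq
      exact Fin.ext (by omega)
    have honb2 : Orthonormal ℝ
        (fun j : Fin (D - (d - 1)) => bb ⟨d - 1 + (j : ℕ), by omega⟩) :=
      bb.orthonormal.comp _ hinj
    have hfinK2 : finrank ℝ K2 = D - (d - 1) := by
      rw [hK2, finrank_span_eq_card honb2.linearIndependent, Fintype.card_fin]
    have hsum := Submodule.finrank_sup_add_finrank_inf_eq Lstar K2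
    have hsuple : finrank ℝ ↥(Lstar ⊔ K2) ≤ D := by
      have := Submodule.finrank_le (Lstar ⊔ K2)
      rwa [finrank_euclideanSpace_fin] at this
    have hinf : 1 ≤ finrank ℝ ↥(Lstar ⊓ K2) := by
      rw [hLstar, hfinK2] at hsum
      omega
    have hne : Lstar ⊓ K2 ≠ ⊥ := by
      intro hbot
      rw [hbot, finrank_bot] at hinf
      omega
    obtain ⟨z, hzmem, hz0⟩ := Submodule.exists_mem_ne_zero_of_ne_bot hne
    have hz1 : z ∈ Lstar := hzmem.1
    have hz2 : z ∈ K2 := hzmem.2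
    -- coordinates of z vanish below d - 1
    have hzcoord : ∀ i : Fin D, (i : ℕ) < d - 1 → inner (𝕜 := ℝ) (bb i) z = 0 := by
      intro i hi
      rw [hK2] at hz2
      refine inner_eq_zero_of_mem_span ?_ hz2
      rintro y ⟨j, rfl⟩
      refine bb.orthonormal.2 ?_
      intro hij
      have : (i : ℕ) = d - 1 + (j : ℕ) := congrArg Fin.val hij
      omega
    have hquadT : inner (𝕜 := ℝ) z (T z) = ∑ i, μ i * inner (𝕜 := ℝ) (bb i) z ^ 2 :=
      quad_eq bb T μ heigT z
    have hub : inner (𝕜 := ℝ) z (T z) ≤ μ ⟨d - 1, hd1D⟩ * ‖z‖ ^ 2 := by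
      rw [hquadT, parseval_real bb z, Finset.mul_sum]
      apply Finset.sum_le_sum
      intro i _
      by_cases hi : (i : ℕ) < d - 1
      · rw [hzcoord i hi]
        simp
      · have hle : (⟨d - 1, hd1D⟩ : Fin D) ≤ i := by
          rw [Fin.le_def]
          exact (by omega : d - 1 ≤ (i : ℕ))
        have := hμ hle
        nlinarith [sq_nonneg (inner (𝕜 := ℝ) (bb i) z)]
    have hlb : ρ * ‖z‖ ^ 2 ≤ inner (𝕜 := ℝ) z (T z) := by
      have h1 := hSquad z hz1
      have h2 := hEpsd z
      have h3 : inner (𝕜 := ℝ) z (T z)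
          = inner (𝕜 := ℝ) z (S z) + inner (𝕜 := ℝ) z (Eo z) := by
        rw [hT z, inner_add_right]
      linarith
    have hznorm : 0 < ‖z‖ ^ 2 := by
      have : 0 < ‖z‖ := norm_pos_iff.mpr hz0
      positivity
    have hfin : ρ * ‖z‖ ^ 2 ≤ μ ⟨d - 1, hd1D⟩ * ‖z‖ ^ 2 := le_trans hlb hub
    exact le_of_mul_le_mul_right (by linarith [hfin]) hznorm
  have hμge : ∀ i : Fin D, (i : ℕ) < d → ρ ≤ μ i := by
    intro i hi
    refine le_trans hμd1 (hμ ?_)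
    rw [Fin.le_def]
    exact (by omega : (i : ℕ) ≤ d - 1)
  -- Claim A
  have hA : ∀ v ∈ Lspca, ‖v - projCLM Lstar v‖ ≤ c * ‖v‖ := by
    intro v hv
    set w : Fin D → ℝ := fun i =>
      if (i : ℕ) < d then inner (𝕜 := ℝ) (bb i) v / μ i else 0 with hw
    set v' : Euc := ∑ i, w i • bb i with hv'
    have hμne : ∀ i : Fin D, (i : ℕ) < d → μ i ≠ 0 := fun i hi =>
      ne_of_gt (lt_of_lt_of_le hρ (hμge i hi))
    have hTv' : T v' = v := by
      rw [eigen_apply bb T μ heigT v']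
      have hcoef : ∀ i : Fin D, μ i * inner (𝕜 := ℝ) (bb i) v' = inner (𝕜 := ℝ) (bb i) v := by
        intro i
        rw [hv', inner_sum_smul bb w i, hw]
        by_cases hi : (i : ℕ) < d
        · simp only [hi, if_true]
          rw [mul_comm, div_mul_cancel₀ _ (hμne i hi)]
        · simp only [hi, if_false, mul_zero]
          exact (hcoordLspca v hv i (by omega)).symm
      calc (∑ i, (μ i * inner (𝕜 := ℝ) (bb i) v') • bb i)
          = ∑ i, inner (𝕜 := ℝ) (bb i) v • bb i := by
            refine Finset.sum_congr rfl fun i _ => ?_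
            rw [hcoef i]
        _ = v := bb.sum_repr' v
    have hv'norm : ‖v'‖ ≤ ‖v‖ / ρ := by
      have h1 : ‖v'‖ ^ 2 ≤ (‖v‖ / ρ) ^ 2 := by
        rw [hv', norm_sum_smul_sq bb w, div_pow, parseval_real bb v]
        rw [Finset.sum_div]
        apply Finset.sum_le_sum
        intro i _
        rw [hw]
        by_cases hi : (i : ℕ) < d
        · simp only [hi, if_true, div_pow]
          have h1 : ρ ^ 2 ≤ μ i ^ 2 := by nlinarith [hμge i hi]
          gcongr
        · simp only [hi, if_false]
          have h0 : (0:ℝ) ^ 2 = 0 := by norm_num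
          rw [h0]
          positivity
      have h2 := Real.sqrt_le_sqrt h1
      rwa [Real.sqrt_sq (norm_nonneg _), Real.sqrt_sq (by positivity)] at h2
    have hsplit : v - projCLM Lstar v = Eo v' - projCLM Lstar (Eo v') := by
      have h1 : v = S v' + Eo v' := by rw [← hTv', hT]
      have h2 : projCLM Lstar v = S v' + projCLM Lstar (Eo v') := by
        rw [h1, map_add, projCLM_eq_self Lstar (hSrange v')]
      rw [h2, h1]
      abel
    rw [hsplit]
    calc ‖Eo v' - projCLM Lstar (Eo v')‖ ≤ ‖Eo v'‖ := projCLM_norm_sub_le _ _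
      _ ≤ ε2 * ‖v'‖ := hEnorm v'
      _ ≤ ε2 * (‖v‖ / ρ) := mul_le_mul_of_nonneg_left hv'norm hε2
      _ = c * ‖v‖ := by rw [hcdef]; ring
  -- Bound 1 : P contracts vectors orthogonal to Lstar
  have hPu : ∀ u ∈ Lstarᗮ, ‖projCLM Lspca u‖ ≤ c * ‖u‖ := by
    intro u hu
    set Pu : Euc := projCLM Lspca u with hPud
    have h1 : ‖Pu‖ ^ 2 = inner (𝕜 := ℝ) Pu u := by
      have horth : inner (𝕜 := ℝ) Pu (u - Pu) = 0 :=
        Submodule.inner_right_of_mem_orthogonal (projCLM_mem Lspca u)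
          (projCLM_sub_mem Lspca u)
      have : inner (𝕜 := ℝ) Pu u
          = inner (𝕜 := ℝ) Pu Pu + inner (𝕜 := ℝ) Pu (u - Pu) := by
        rw [← inner_add_right]
        congr 1
        abel
      rw [this, horth, add_zero, real_inner_self_eq_norm_sq]
    have h2 : inner (𝕜 := ℝ) Pu u ≤ c * ‖Pu‖ * ‖u‖ := by
      have hz : inner (𝕜 := ℝ) (projCLM Lstar Pu) u = 0 := by
        exact Submodule.inner_right_of_mem_orthogonal (projCLM_mem Lstar Pu) hu
      have : inner (𝕜 := ℝ) Pu u = inner (𝕜 := ℝ) (Pu - projCLM Lstar Pu) u := by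
        rw [inner_sub_left, hz, sub_zero]
      rw [this]
      calc inner (𝕜 := ℝ) (Pu - projCLM Lstar Pu) u
          ≤ ‖Pu - projCLM Lstar Pu‖ * ‖u‖ := real_inner_le_norm _ _
        _ ≤ (c * ‖Pu‖) * ‖u‖ := by
            apply mul_le_mul_of_nonneg_right _ (norm_nonneg u)
            exact hA Pu (projCLM_mem Lspca u)
        _ = c * ‖Pu‖ * ‖u‖ := by ring
    rcases (norm_nonneg Pu).eq_or_lt with h | h
    · rw [← h]
      positivity
    · nlinarith
  -- Claim B
  have hB : ∀ w ∈ Lstar, ‖w - projCLM Lspca w‖ ^ 2 ≤ c ^ 2 / (1 - c ^ 2) * ‖w‖ ^ 2 := by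
    intro w hw
    set f : Lspca →ₗ[ℝ] Lstar :=
      (Lstar.orthogonalProjectionOnto).toLinearMap.comp (Submodule.subtype Lspca) with hf
    have hinj : Function.Injective f := by
      rw [← LinearMap.ker_eq_bot, Submodule.eq_bot_iff]
      rintro ⟨v, hvmem⟩ hvker
      have hQv : projCLM Lstar v = 0 := by
        have : (Lstar.orthogonalProjectionOnto) v = 0 := hvker
        show (Lstar.subtypeL.comp (Lstar.orthogonalProjectionOnto)) v = 0
        simp [this]
      have hle : ‖v‖ ≤ c * ‖v‖ := by
        have := hA v hvmem
        rwa [hQv, sub_zero] at this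
      have : ‖v‖ = 0 := by nlinarith [norm_nonneg v]
      have : v = 0 := norm_eq_zero.mp this
      simp [this]
    have hsurj : Function.Surjective f :=
      (LinearMap.injective_iff_surjective_of_finrank_eq_finrank
        (by rw [hfinLspca, hLstar])).mp hinj
    obtain ⟨⟨x', hx'mem⟩, hfx⟩ := hsurj ⟨w, hw⟩
    have hQx' : projCLM Lstar x' = w := by
      have : ((Lstar.orthogonalProjectionOnto) x' : Euc) = w := congrArg Subtype.val hfx
      exact this
    have hAx' := hA x' hx'mem
    rw [hQx'] at hAx'
    have hx'norm : (1 - c ^ 2) * ‖x'‖ ^ 2 ≤ ‖w‖ ^ 2 := by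
      have hp := projCLM_pyth Lstar x'
      rw [hQx'] at hp
      nlinarith [norm_nonneg x', norm_nonneg (x' - w)]
    have hPx' : projCLM Lspca x' = x' := projCLM_eq_self Lspca hx'mem
    have hkey : w - projCLM Lspca w = projCLM Lspca (x' - w) - (x' - w) := by
      rw [map_sub, hPx']
      abel
    have hnle : ‖w - projCLM Lspca w‖ ≤ c * ‖x'‖ := by
      rw [hkey]
      calc ‖projCLM Lspca (x' - w) - (x' - w)‖ = ‖(x' - w) - projCLM Lspca (x' - w)‖ := by
            rw [← norm_neg]
            congr 1
            abel
        _ ≤ ‖x' - w‖ := projCLM_norm_sub_le _ _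
        _ ≤ c * ‖x'‖ := hAx'
    have hsq : ‖w - projCLM Lspca w‖ ^ 2 ≤ c ^ 2 * ‖x'‖ ^ 2 := by
      nlinarith [norm_nonneg (w - projCLM Lspca w), norm_nonneg x', hc0]
    calc ‖w - projCLM Lspca w‖ ^ 2 ≤ c ^ 2 * ‖x'‖ ^ 2 := hsq
      _ ≤ c ^ 2 / (1 - c ^ 2) * ‖w‖ ^ 2 := by
          rw [div_mul_eq_mul_div, le_div_iff₀ hcc]
          nlinarith [sq_nonneg c]
  -- final assembly
  refine ContinuousLinearMap.opNorm_le_bound _ hs0.le fun x => ?_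
  set qx : Euc := projCLM Lstar x with hqx
  set u : Euc := x - qx with hu
  have huorth : u ∈ Lstarᗮ := projCLM_sub_mem Lstar x
  have hqmem : qx ∈ Lstar := projCLM_mem Lstar x
  have hdecomp : (projCLM Lspca - projCLM Lstar) x
      = projCLM Lspca u - (qx - projCLM Lspca qx) := by
    have : x = u + qx := by rw [hu]; abel
    rw [ContinuousLinearMap.sub_apply, ← hqx]
    conv_lhs => rw [this]
    rw [map_add]
    abel
  have horth : inner (𝕜 := ℝ) (projCLM Lspca u) (qx - projCLM Lspca qx) = 0 :=
    Submodule.inner_right_of_mem_orthogonal (projCLM_mem Lspca u)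
      (projCLM_sub_mem Lspca qx)
  have hpyth2 : ‖(projCLM Lspca - projCLM Lstar) x‖ ^ 2
      = ‖projCLM Lspca u‖ ^ 2 + ‖qx - projCLM Lspca qx‖ ^ 2 := by
    rw [hdecomp, norm_sub_sq_real, horth]
    ring
  set k : ℝ := c ^ 2 / (1 - c ^ 2) with hkdef
  have hck : c ^ 2 ≤ k := by
    rw [hkdef, le_div_iff₀ hcc]
    nlinarith [sq_nonneg c]
  have hb1 : ‖projCLM Lspca u‖ ^ 2 ≤ c ^ 2 * ‖u‖ ^ 2 := by
    have := hPu u huorth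
    nlinarith [norm_nonneg (projCLM Lspca u), norm_nonneg u, hc0]
  have hb2 : ‖qx - projCLM Lspca qx‖ ^ 2 ≤ k * ‖qx‖ ^ 2 := hB qx hqmem
  have hx2 : ‖qx‖ ^ 2 + ‖u‖ ^ 2 = ‖x‖ ^ 2 := by
    have := projCLM_pyth Lstar x
    rw [← hqx, ← hu] at this
    linarith
  have hk0 : 0 ≤ k := by positivity
  have hfinal2 : ‖(projCLM Lspca - projCLM Lstar) x‖ ^ 2 ≤ (s * ‖x‖) ^ 2 := by
    have h1 : ‖(projCLM Lspca - projCLM Lstar) x‖ ^ 2 ≤ k * ‖x‖ ^ 2 := by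
      rw [hpyth2, ← hx2]
      have h3 : c ^ 2 * ‖u‖ ^ 2 ≤ k * ‖u‖ ^ 2 :=
        mul_le_mul_of_nonneg_right hck (sq_nonneg _)
      linarith [hb1, hb2]
    have h2 : k * ‖x‖ ^ 2 ≤ s ^ 2 * ‖x‖ ^ 2 :=
      mul_le_mul_of_nonneg_right hk (sq_nonneg _)
    calc ‖(projCLM Lspca - projCLM Lstar) x‖ ^ 2 ≤ k * ‖x‖ ^ 2 := h1
      _ ≤ s ^ 2 * ‖x‖ ^ 2 := h2
      _ = (s * ‖x‖) ^ 2 := by ring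
  have hsx : 0 ≤ s * ‖x‖ := mul_nonneg hs0.le (norm_nonneg x)
  have hroot := Real.sqrt_le_sqrt hfinal2
  rwa [Real.sqrt_sq (norm_nonneg _), Real.sqrt_sq hsx] at hroot

end Helpers

set_option maxHeartbeats 1000000 in
/-- (Guarantee for Spherical PCA initialization.) Let `0 < γ < π/4`, let the
dataset consist of nonzero inliers in the `d`-subspace `L*` and nonzero outliers, let `X̃_in`,
`X̃_out` be the matrices of unit-normalized inliers/outliers, and suppose
`(sin γ/√2)·λ_d(X̃_in X̃_inᵀ) − ‖X̃_out‖₂² > 0`. If `L_SPCA` is the span of `d` orthonormal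
eigenvectors of `A = X̃_in X̃_inᵀ + X̃_out X̃_outᵀ` corresponding to its `d` largest
eigenvalues, then `‖P_{L_SPCA} − P_{L*}‖₂ ≤ sin γ`, i.e. the largest principal angle between
`L_SPCA` and `L*` is at most `γ`. -/
theorem stmt_11 (D d Nin Nout : ℕ) (hd : 1 ≤ d) (hdD : d ≤ D)
    (γ : ℝ) (hγ0 : 0 < γ) (hγ1 : γ < Real.pi / 4)
    (Lstar : Submodule ℝ (EuclideanSpace ℝ (Fin D)))
    (hLstar : finrank ℝ Lstar = d)
    (a : Fin Nin → EuclideanSpace ℝ (Fin D)) (ha0 : ∀ i, a i ≠ 0) (haL : ∀ i, a i ∈ Lstar)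
    (o : Fin Nout → EuclideanSpace ℝ (Fin D)) (ho0 : ∀ i, o i ≠ 0)
    (Xin : Matrix (Fin D) (Fin Nin) ℝ) (hXin : Xin = Matrix.of fun i j => a j i / ‖a j‖)
    (Xout : Matrix (Fin D) (Fin Nout) ℝ) (hXout : Xout = Matrix.of fun i j => o j i / ‖o j‖)
    -- an antitone listing `ν` of the eigenvalues of `X̃_in X̃_inᵀ`, so `λ_d = ν (d-1)`
    (ν : Fin D → ℝ) (hν : Antitone ν)
    (cc : OrthonormalBasis (Fin D) ℝ (EuclideanSpace ℝ (Fin D)))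
    (heigIn : ∀ i, Matrix.toEuclideanLin (Xin * Xin.transpose) (cc i) = ν i • cc i)
    (hstab : 0 < Real.sin γ / Real.sqrt 2 * ν ⟨d - 1, by omega⟩ - specNorm Xout ^ 2)
    -- an antitone listing `μ` of the eigenvalues of `A`, with orthonormal eigenbasis `bb`
    (μ : Fin D → ℝ) (hμ : Antitone μ)
    (bb : OrthonormalBasis (Fin D) ℝ (EuclideanSpace ℝ (Fin D)))
    (heigA : ∀ i, Matrix.toEuclideanLin (Xin * Xin.transpose + Xout * Xout.transpose) (bb i)
      = μ i • bb i)
    -- `L_SPCA`: the span of the `d` orthonormal eigenvectors of `A` corresponding to its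
    -- `d` largest eigenvalues
    (Lspca : Submodule ℝ (EuclideanSpace ℝ (Fin D)))
    (hLspca : Lspca = Submodule.span ℝ (Set.range fun j : Fin d => bb (Fin.castLE hdD j))) :
    ‖projCLM Lspca - projCLM Lstar‖ ≤ Real.sin γ := by
  classical
  have hd1D : d - 1 < D := by omega
  have hstab' : 0 < Real.sin γ / Real.sqrt 2 * ν ⟨d - 1, hd1D⟩ - specNorm Xout ^ 2 := hstab
  have hs0 : 0 < Real.sin γ := by
    apply Real.sin_pos_of_pos_of_lt_pi hγ0
    have := Real.pi_pos
    linarith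
  have hs1 : Real.sin γ ≤ 1 := Real.sin_le_one γ
  have hsqrt2 : 0 < Real.sqrt 2 := by positivity
  have hε2 : 0 ≤ specNorm Xout ^ 2 := sq_nonneg _
  have hρ : 0 < ν ⟨d - 1, hd1D⟩ := by
    by_contra h
    push_neg at h
    have : Real.sin γ / Real.sqrt 2 * ν ⟨d - 1, hd1D⟩ ≤ 0 :=
      mul_nonpos_of_nonneg_of_nonpos (le_of_lt (div_pos hs0 hsqrt2)) h
    linarith
  have hc : specNorm Xout ^ 2 < Real.sin γ / Real.sqrt 2 * ν ⟨d - 1, hd1D⟩ := by linarith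
  -- T = S + E pointwise
  have hT : ∀ x, Matrix.toEuclideanLin (Xin * Xin.transpose + Xout * Xout.transpose) x
      = Matrix.toEuclideanLin (Xin * Xin.transpose) x
        + Matrix.toEuclideanLin (Xout * Xout.transpose) x := by
    intro x
    rw [map_add, LinearMap.add_apply]
  -- range of S lies in Lstar
  have hcol : ∀ j, (WithLp.toLp 2 (fun i => Xin i j) : EuclideanSpace ℝ (Fin D)) ∈ Lstar := by
    intro j
    have hXj : (WithLp.toLp 2 (fun i => Xin i j) : EuclideanSpace ℝ (Fin D)) = ‖a j‖⁻¹ • a j := by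
      apply PiLp.ext
      intro i
      rw [hXin]
      simp [Matrix.of_apply, div_eq_inv_mul, PiLp.smul_apply, mul_comm]
    rw [hXj]
    exact Submodule.smul_mem _ _ (haL j)
  have hSrange : ∀ x, Matrix.toEuclideanLin (Xin * Xin.transpose) x ∈ Lstar := by
    intro x
    rw [toEuclideanLin_mul']
    exact toEuclideanLin_mem hcol _
  -- lower bound for eigenvalues of S below d
  have hνge : ∀ i : Fin D, (i : ℕ) < d → ν ⟨d - 1, hd1D⟩ ≤ ν i := by
    intro i hi
    apply hν
    rw [Fin.le_def]
    exact (by omega : (i : ℕ) ≤ d - 1)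
  -- the first d vectors of cc span Lstar
  have hccmem : ∀ i : Fin D, (i : ℕ) < d → cc i ∈ Lstar := by
    intro i hi
    have hνne : ν i ≠ 0 := ne_of_gt (lt_of_lt_of_le hρ (hνge i hi))
    have : cc i = (ν i)⁻¹ • Matrix.toEuclideanLin (Xin * Xin.transpose) (cc i) := by
      rw [heigIn i, smul_smul, inv_mul_cancel₀ hνne, one_smul]
    rw [this]
    exact Submodule.smul_mem _ _ (hSrange _)
  have honbc : Orthonormal ℝ (fun j : Fin d => cc (Fin.castLE hdD j)) :=
    cc.orthonormal.comp _ (Fin.castLE_injective hdD)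
  have hspan : Submodule.span ℝ (Set.range fun j : Fin d => cc (Fin.castLE hdD j)) = Lstar := by
    apply Submodule.eq_of_le_of_finrank_eq
    · rw [Submodule.span_le]
      rintro y ⟨j, rfl⟩
      exact hccmem _ (by simpa [Fin.coe_castLE] using j.isLt)
    · rw [finrank_span_eq_card honbc.linearIndependent, Fintype.card_fin, hLstar]
  -- quadratic lower bound for S on Lstar
  have hSquad : ∀ z ∈ Lstar, ν ⟨d - 1, hd1D⟩ * ‖z‖ ^ 2
      ≤ inner (𝕜 := ℝ) z (Matrix.toEuclideanLin (Xin * Xin.transpose) z) := by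
    intro z hz
    have hzc : ∀ i : Fin D, d ≤ (i : ℕ) → inner (𝕜 := ℝ) (cc i) z = 0 := by
      intro i hi
      rw [← hspan] at hz
      refine inner_eq_zero_of_mem_span ?_ hz
      rintro y ⟨j, rfl⟩
      refine cc.orthonormal.2 ?_
      intro hij
      have : (i : ℕ) = (Fin.castLE hdD j : ℕ) := congrArg Fin.val hij
      simp [Fin.coe_castLE] at this
      omega
    rw [quad_eq cc _ ν heigIn z, parseval_real cc z, Finset.mul_sum]
    apply Finset.sum_le_sum
    intro i _
    by_cases hi : (i : ℕ) < d
    · exact mul_le_mul_of_nonneg_right (hνge i hi) (sq_nonneg _)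
    · rw [hzc i (by omega)]
      simp
  exact key hd hdD hs0 hs1 hρ hε2 hc Lstar hLstar
    (Matrix.toEuclideanLin (Xin * Xin.transpose + Xout * Xout.transpose))
    (Matrix.toEuclideanLin (Xin * Xin.transpose))
    (Matrix.toEuclideanLin (Xout * Xout.transpose))
    hT hSrange hSquad (gram_norm_le Xout) (gram_inner_nonneg Xout)
    μ hμ bb heigA Lspca hLspca
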